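/- For a, b ∈ (0,1], the map f = f_{a,b} has no 2-periodic point x with both x ≤ 1/2 and f(x) ≤ 1/2; i.e., if x ∈ [0,1/2], f(x) ∈ [0,1/2] and f(f(x)) = x, then f(x) = x. -/
import Mathlib


noncomputable def fab (a b x : ℝ) : ℝ :=
  if x ≤ 1/2 then x * (1 + a - a * x) else x * (1 - b + b * x)

theorem stmt15 (a b : ℝ) (ha : a ∈ Set.Ioc (0:ℝ) 1) (hb : b ∈ Set.Ioc (0:ℝ) 1)
    (x : ℝ) (hx : x ∈ Set.Icc (0:ℝ) (1/2)) (hfx : fab a b x ∈ Set.Icc (0:ℝ) (1/2))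
    (hper : fab a b (fab a b x) = x) :
    fab a b x = x := by
  obtain ⟨ha0, ha1⟩ := ha
  have key : ∀ y : ℝ, 0 ≤ y → y ≤ 1/2 → y ≤ fab a b y := by
    intro y hy0 hy2
    rw [fab, if_pos hy2]
    nlinarith [mul_nonneg (mul_nonneg ha0.le hy0) (by linarith : (0:ℝ) ≤ 1 - y)]
  have h1 : x ≤ fab a b x := key x hx.1 hx.2
  have h2 : fab a b x ≤ fab a b (fab a b x) := key _ hfx.1 hfx.2
  rw [hper] at h2
  linarith
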